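/- Let α, β ≥ 1 with n = 2^α·5^β satisfying n·φ(n) ≡ 2 (mod σ(n)). Then gcd(2^(α+1) - 1, (5^(β+1) - 1)/4) = 1. -/

import Mathlib

set_option maxRecDepth 20000

theorem M_N_coprime (α β : ℕ) (hα : 1 ≤ α) (hβ : 1 ≤ β)
    (h : (2 ^ α * 5 ^ β) * Nat.totient (2 ^ α * 5 ^ β) ≡ 2
      [MOD ArithmeticFunction.sigma 1 (2 ^ α * 5 ^ β)]) :
    Nat.gcd (2 ^ (α + 1) - 1) ((5 ^ (β + 1) - 1) / 4) = 1 := by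
  set M := 2 ^ (α + 1) - 1 with hM
  set N := (5 ^ (β + 1) - 1) / 4 with hN
  have hcop : Nat.Coprime (2 ^ α) (5 ^ β) := Nat.Coprime.pow _ _ (by norm_num)
  -- sigma value
  have hσ : ArithmeticFunction.sigma 1 (2 ^ α * 5 ^ β) = M * N := by
    rw [ArithmeticFunction.isMultiplicative_sigma.map_mul_of_coprime hcop,
      ArithmeticFunction.sigma_one_apply_prime_pow Nat.prime_two,
      ArithmeticFunction.sigma_one_apply_prime_pow (by norm_num : Nat.Prime 5),
      Nat.geomSum_eq (by norm_num) _, Nat.geomSum_eq (by norm_num) _]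
    norm_num
    rfl
  -- totient value
  have hφ : Nat.totient (2 ^ α * 5 ^ β) = 2 ^ (α + 1) * 5 ^ (β - 1) := by
    rw [Nat.totient_mul hcop, Nat.totient_prime_pow Nat.prime_two hα,
      Nat.totient_prime_pow (by norm_num : Nat.Prime 5) hβ,
      show α + 1 = α - 1 + 2 by omega, pow_add]
    ring
  have hnφ : (2 ^ α * 5 ^ β) * Nat.totient (2 ^ α * 5 ^ β)
      = 2 ^ (2 * α + 1) * 5 ^ (2 * β - 1) := by
    rw [hφ, show 2 * α + 1 = α + (α + 1) by ring, show 2 * β - 1 = β + (β - 1) by omega,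
      pow_add, pow_add]
    ring
  -- 4 * N = 5^(β+1) - 1
  have h5 : 5 ^ (β + 1) % 4 = 1 := by
    rw [Nat.pow_mod]; norm_num
  have h5pos : 1 ≤ 5 ^ (β + 1) := Nat.one_le_pow _ _ (by norm_num)
  have hN4 : N * 4 = 5 ^ (β + 1) - 1 := by
    rw [hN]
    exact Nat.div_mul_cancel (by omega)
  set d := Nat.gcd M N with hd
  have hdM : d ∣ M := Nat.gcd_dvd_left _ _
  have hdN : d ∣ N := Nat.gcd_dvd_right _ _
  have hdσ : d ∣ ArithmeticFunction.sigma 1 (2 ^ α * 5 ^ β) := by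
    rw [hσ]; exact hdM.mul_right N
  have hd2 : 2 ^ (α + 1) ≡ 1 [MOD d] :=
    ((Nat.modEq_iff_dvd' (Nat.one_le_two_pow)).mpr hdM).symm
  have hd5 : 5 ^ (β + 1) ≡ 1 [MOD d] :=
    ((Nat.modEq_iff_dvd' h5pos).mpr (hdN.trans ⟨4, hN4.symm.trans (by ring)⟩)).symm
  -- main congruence mod d
  have hmod : (2 ^ α * 5 ^ β) * Nat.totient (2 ^ α * 5 ^ β) ≡ 2 [MOD d] :=
    (h.of_dvd hdσ)
  have key : (500 : ℕ) ≡ 1 [MOD d] := by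
    have h2 : (2 ^ α * 5 ^ β) * Nat.totient (2 ^ α * 5 ^ β) * 250
        = (2 ^ (α + 1)) ^ 2 * (5 ^ (β + 1)) ^ 2 := by
      rw [hnφ, show (250 : ℕ) = 2 * 5 ^ 3 by norm_num, ← pow_mul, ← pow_mul,
        show (α + 1) * 2 = (2 * α + 1) + 1 by ring, show (β + 1) * 2 = (2 * β - 1) + 3 by omega,
        pow_add, pow_add]
      ring
    have h1 : (2 ^ (α + 1)) ^ 2 * (5 ^ (β + 1)) ^ 2 ≡ 2 * 250 [MOD d] := by
      rw [← h2]; exact hmod.mul_right 250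
    have h3 : (2 ^ (α + 1)) ^ 2 * (5 ^ (β + 1)) ^ 2 ≡ 1 * 1 [MOD d] :=
      (hd2.pow 2).mul (hd5.pow 2)
    have := (h1.symm.trans h3)
    simpa using this
  have hd499 : d ∣ 499 := by
    have := (Nat.modEq_iff_dvd' (by norm_num : 1 ≤ 500)).mp key.symm
    simpa using this
  -- α must be even
  have hαeven : Even α := by
    by_contra hodd
    have hα1 : Even (α + 1) := by
      rcases Nat.even_or_odd α with he | ho
      · exact absurd he hodd
      · exact ho.add_one
    obtain ⟨k, hk⟩ := hα1
    have h3M : 3 ∣ M := by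
      have h4 : (4 : ℕ) ^ k ≡ 1 [MOD 3] := by
        simpa using Nat.ModEq.pow k (show (4 : ℕ) ≡ 1 [MOD 3] by decide)
      have hdv := (Nat.modEq_iff_dvd' (Nat.one_le_pow _ _ (by norm_num))).mp h4.symm
      rw [hM, hk, show k + k = 2 * k by ring, pow_mul]
      norm_num
      exact hdv
    have h3σ : 3 ∣ ArithmeticFunction.sigma 1 (2 ^ α * 5 ^ β) := by
      rw [hσ]; exact h3M.mul_right N
    have hmod3 : (2 ^ α * 5 ^ β) * Nat.totient (2 ^ α * 5 ^ β) ≡ 2 [MOD 3] :=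
      h.of_dvd h3σ
    rw [hnφ] at hmod3
    have hL : 2 ^ (2 * α + 1) * 5 ^ (2 * β - 1) ≡ 1 [MOD 3] := by
      have e2 : (2 : ℕ) ^ (2 * α + 1) ≡ 2 [MOD 3] := by
        rw [pow_succ, pow_mul]
        have : (4 : ℕ) ^ α ≡ 1 [MOD 3] := by
          simpa using Nat.ModEq.pow α (show (4 : ℕ) ≡ 1 [MOD 3] by decide)
        calc (2 ^ 2 : ℕ) ^ α * 2 = 4 ^ α * 2 := by norm_num
          _ ≡ 1 * 2 [MOD 3] := this.mul_right 2
          _ = 2 := by norm_num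
      have e5 : (5 : ℕ) ^ (2 * β - 1) ≡ 2 ^ (2 * β - 1) [MOD 3] :=
        Nat.ModEq.pow _ (by decide)
      obtain ⟨m, hm⟩ : ∃ m, 2 * β - 1 = 2 * m + 1 := ⟨β - 1, by omega⟩
      have e5' : (2 : ℕ) ^ (2 * β - 1) ≡ 2 [MOD 3] := by
        rw [hm, pow_succ, pow_mul]
        have : (4 : ℕ) ^ m ≡ 1 [MOD 3] := by
          simpa using Nat.ModEq.pow m (show (4 : ℕ) ≡ 1 [MOD 3] by decide)
        calc (2 ^ 2 : ℕ) ^ m * 2 = 4 ^ m * 2 := by norm_num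
          _ ≡ 1 * 2 [MOD 3] := this.mul_right 2
          _ = 2 := by norm_num
      calc 2 ^ (2 * α + 1) * 5 ^ (2 * β - 1)
          ≡ 2 * 2 [MOD 3] := e2.mul (e5.trans e5')
        _ ≡ 1 [MOD 3] := by decide
    exact absurd (hL.symm.trans hmod3) (by decide)
  -- conclude
  rcases (Nat.Prime.eq_one_or_self_of_dvd (by norm_num : Nat.Prime 499) d hd499) with h1 | h499
  · exact h1
  · exfalso
    have h499M : (499 : ℕ) ∣ M := h499 ▸ hdM
    have hpow : 2 ^ (α + 1) ≡ 1 [MOD 499] :=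
      ((Nat.modEq_iff_dvd' Nat.one_le_two_pow).mpr h499M).symm
    have hz : (2 : ZMod 499) ^ (α + 1) = 1 := by
      have := (ZMod.natCast_eq_natCast_iff _ _ _).mpr hpow
      push_cast at this
      exact this
    have hz166 : (2 : ZMod 499) ^ 166 = 1 := by
      have hmod166 : (2 : ℕ) ^ 166 ≡ 1 [MOD 499] := by
        show 2 ^ 166 % 499 = 1 % 499
        norm_num
      have := (ZMod.natCast_eq_natCast_iff _ _ _).mpr hmod166
      push_cast at this
      exact this
    have ho1 : orderOf (2 : ZMod 499) ∣ α + 1 := orderOf_dvd_of_pow_eq_one hz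
    have ho2 : orderOf (2 : ZMod 499) ∣ 166 := orderOf_dvd_of_pow_eq_one hz166
    have hoodd : ¬ 2 ∣ orderOf (2 : ZMod 499) := by
      intro h2
      have : (2 : ℕ) ∣ α + 1 := h2.trans ho1
      obtain ⟨k, hk⟩ := hαeven
      omega
    have ho83 : orderOf (2 : ZMod 499) ∣ 83 := by
      have hc : Nat.Coprime (orderOf (2 : ZMod 499)) 2 :=
        Nat.coprime_comm.mp ((Nat.prime_two.coprime_iff_not_dvd).mpr hoodd)
      exact Nat.Coprime.dvd_of_dvd_mul_left hc
        (by simpa [show (166 : ℕ) = 2 * 83 by norm_num, mul_comm] using ho2)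
    have hz83 : (2 : ZMod 499) ^ 83 = 1 := by
      obtain ⟨c, hc⟩ := ho83
      rw [hc, pow_mul, pow_orderOf_eq_one, one_pow]
    have hfin : (2 : ℕ) ^ 83 ≡ 1 [MOD 499] := by
      have : ((2 : ℕ) ^ 83 : ZMod 499) = ((1 : ℕ) : ZMod 499) := by push_cast; exact hz83
      exact (ZMod.natCast_eq_natCast_iff _ _ _).mp this
    have : 2 ^ 83 % 499 = 1 % 499 := hfin
    norm_num at this
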